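/- Let S be a Cu-semigroup, let y be a full element of S, and let (y_n)_{n≥1} be a sequence of full elements of S with y_n ≤ y_{n+1} ≤ y for all n. Assume that F_y(S) = ∅ and that lim_{n→∞} ρ(y, y_n) = ∞ (the sequence (ρ(y,y_n)) is decreasing, so the limit exists in [0,∞]). Then: (1) F_{y_n}(S) ≠ ∅ for every n; (2) if rc(S, y_m) < ∞ for some m, then lim_{n→∞} rc(S, n·y_n) = rc(S, y) = 0. -/

import Mathlib

open scoped ENNReal

/-- `x' ≪ x`: for every increasing sequence whose supremum is `≥ x`,
some term of the sequence dominates `x'`. -/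
def CuWayBelow {S : Type*} [Preorder S] (x' x : S) : Prop :=
  ∀ f : ℕ → S, Monotone f → ∀ s : S, IsLUB (Set.range f) s → x ≤ s → ∃ n, x' ≤ f n

/-- A `Cu`-semigroup: a partially ordered abelian monoid whose least element is `0`,
satisfying the axioms (O1)–(O4). -/
class CuSemigroup (S : Type*) extends AddCommMonoid S, PartialOrder S, IsOrderedAddMonoid S where
  zero_le : ∀ x : S, 0 ≤ x
  O1 : ∀ f : ℕ → S, Monotone f → ∃ s : S, IsLUB (Set.range f) s
  O2 : ∀ x : S, ∃ f : ℕ → S, (∀ n, CuWayBelow (f n) (f (n + 1))) ∧ IsLUB (Set.range f) x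
  O3 : ∀ {x' x y' y : S}, CuWayBelow x' x → CuWayBelow y' y → CuWayBelow (x' + y') (x + y)
  O4 : ∀ f g : ℕ → S, Monotone f → Monotone g → ∀ a b : S,
      IsLUB (Set.range f) a → IsLUB (Set.range g) b →
      IsLUB (Set.range fun n => f n + g n) (a + b)

/-- A functional on a `Cu`-semigroup: a map `S → [0,∞]` which is additive, order
preserving, sends `0` to `0`, and preserves suprema of increasing sequences. -/
structure IsCuFunctional {S : Type*} [CuSemigroup S] (Λ : S → ℝ≥0∞) : Prop where
  map_zero : Λ 0 = 0
  map_add : ∀ x y : S, Λ (x + y) = Λ x + Λ y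
  mono : Monotone Λ
  map_sup : ∀ f : ℕ → S, Monotone f → ∀ s : S, IsLUB (Set.range f) s → Λ s = ⨆ n, Λ (f n)

/-- `x` is full if `∞ · x = sup_n (n • x)` is the largest element of `S`. -/
def IsFull {S : Type*} [CuSemigroup S] (x : S) : Prop :=
  ∀ s : S, IsLUB (Set.range fun n : ℕ => n • x) s → ∀ y : S, y ≤ s

/-- `F_w(S) ≠ ∅`: there exists a functional normalized at `w`. -/
def FNormNonempty {S : Type*} [CuSemigroup S] (w : S) : Prop :=
  ∃ Λ : S → ℝ≥0∞, IsCuFunctional Λ ∧ Λ w = 1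

/-- The rank ratio `ρ(x, y)`: the infimum of all `r ∈ (0,∞)` with
`λ(x) ≤ r·λ(y)` for every functional `λ`; `∞` if there is no such `r`. -/
noncomputable def rankRatio {S : Type*} [CuSemigroup S] (x y : S) : ℝ≥0∞ :=
  sInf {r : ℝ≥0∞ | 0 < r ∧ r ≠ ⊤ ∧ ∀ Λ : S → ℝ≥0∞, IsCuFunctional Λ → Λ x ≤ r * Λ y}

/-- `S` has `r`-comparison relative to `w`. -/
def HasRComparison {S : Type*} [CuSemigroup S] (r : ℝ≥0∞) (w : S) : Prop :=
  ∀ x y : S, (∀ Λ : S → ℝ≥0∞, IsCuFunctional Λ → Λ x + r * Λ w ≤ Λ y) → x ≤ y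

/-- The radius of comparison of `S` relative to `w`: the infimum of all `r ∈ (0,∞)`
for which `S` has `r`-comparison relative to `w`; `∞` if there is no such `r`. -/
noncomputable def rc {S : Type*} [CuSemigroup S] (w : S) : ℝ≥0∞ :=
  sInf {r : ℝ≥0∞ | 0 < r ∧ r ≠ ⊤ ∧ HasRComparison r w}


section Aux

variable {S : Type*} [CuSemigroup S]

private lemma cuf_nsmul {Λ : S → ℝ≥0∞} (hΛ : IsCuFunctional Λ) (n : ℕ) (x : S) :
    Λ (n • x) = n * Λ x := by
  induction n with
  | zero => simp [hΛ.map_zero]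
  | succ k ih =>
      rw [succ_nsmul, hΛ.map_add, ih, Nat.cast_succ, add_mul, one_mul]

private lemma full_zero {w : S} (hw : IsFull w) {Λ : S → ℝ≥0∞}
    (hΛ : IsCuFunctional Λ) (h0 : Λ w = 0) (x : S) : Λ x = 0 := by
  have hm : Monotone (fun n : ℕ => n • w) :=
    monotone_nat_of_le_succ (fun n => by
      rw [succ_nsmul]
      exact le_add_of_nonneg_right (CuSemigroup.zero_le w))
  obtain ⟨s, hs⟩ := CuSemigroup.O1 _ hm
  have hΛs : Λ s = 0 := by
    rw [hΛ.map_sup _ hm s hs]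
    simp [cuf_nsmul hΛ, h0]
  exact le_antisymm (hΛs ▸ hΛ.mono (hw s hs x)) zero_le

private lemma scale_functional {Λ : S → ℝ≥0∞} (hΛ : IsCuFunctional Λ) (c : ℝ≥0∞) :
    IsCuFunctional (fun x => c * Λ x) where
  map_zero := by simp [hΛ.map_zero]
  map_add := fun x y => by simp only [hΛ.map_add, mul_add]
  mono := fun a b h => mul_le_mul_right (hΛ.mono h) c
  map_sup := fun f hf s hs => by rw [hΛ.map_sup f hf s hs, ENNReal.mul_iSup]

end Aux

/-- Proposition (ExtremeInfiniteRho): for an increasing sequence `(y n)` of full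
elements below a full element `y` with `F_y(S) = ∅` and
`lim_n ρ(y, y n) = ∞` (the limit being the infimum of the decreasing sequence):
(1) `F_{y n}(S) ≠ ∅` for every `n`; (2) if `rc(S, y m) < ∞` for some `m`, then
`lim_n rc(S, n · y n) = rc(S, y) = 0`. -/

theorem stmt4 {S : Type*} [CuSemigroup S] (y : S) (ys : ℕ → S)
    (hy : IsFull y) (hys : ∀ n, IsFull (ys n))
    (hmono : ∀ n, ys n ≤ ys (n + 1)) (hle : ∀ n, ys n ≤ y)
    (hFy : ¬ FNormNonempty y)
    (hlim : (⨅ n, rankRatio y (ys n)) = ⊤) :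
    (∀ n, FNormNonempty (ys n)) ∧
      ((∃ m, rc (ys m) ≠ ⊤) →
        Filter.Tendsto (fun n : ℕ => rc (n • ys n)) Filter.atTop (nhds (rc y)) ∧
          rc y = 0) := by
  classical
  -- Part (1): each `ys n` admits a normalized functional.
  have part1 : ∀ n, FNormNonempty (ys n) := by
    intro n
    have hrr : rankRatio y (ys n) = ⊤ := top_le_iff.mp (hlim ▸ iInf_le _ n)
    have h1 : ¬ (∀ Λ : S → ℝ≥0∞, IsCuFunctional Λ → Λ y ≤ 1 * Λ (ys n)) := by
      intro hall
      have hle1 : rankRatio y (ys n) ≤ 1 := sInf_le ⟨zero_lt_one, ENNReal.one_ne_top, hall⟩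
      rw [hrr] at hle1
      simp at hle1
    push_neg at h1
    obtain ⟨Λ, hΛ, hlt⟩ := h1
    rw [one_mul] at hlt
    have hne_top : Λ (ys n) ≠ ⊤ := ne_top_of_lt hlt
    have hne0 : Λ (ys n) ≠ 0 := by
      intro h0
      have := full_zero (hys n) hΛ h0 y
      rw [this, h0] at hlt
      exact lt_irrefl _ hlt
    exact ⟨fun x => (Λ (ys n))⁻¹ * Λ x, scale_functional hΛ _,
      ENNReal.inv_mul_cancel hne0 hne_top⟩
  refine ⟨part1, ?_⟩
  rintro ⟨m, hm⟩
  have hset : {r : ℝ≥0∞ | 0 < r ∧ r ≠ ⊤ ∧ HasRComparison r (ys m)}.Nonempty := by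
    by_contra h
    rw [Set.not_nonempty_iff_eq_empty] at h
    exact hm (by rw [rc, h, sInf_empty])
  obtain ⟨r₀, hr₀pos, hr₀top, hr₀⟩ := hset
  -- every functional takes value `0` or `⊤` at `y`
  have key : ∀ Λ : S → ℝ≥0∞, IsCuFunctional Λ → Λ y = 0 ∨ Λ y = ⊤ := by
    intro Λ hΛ
    by_contra h
    push_neg at h
    exact hFy ⟨fun x => (Λ y)⁻¹ * Λ x, scale_functional hΛ _,
      ENNReal.inv_mul_cancel h.1 h.2⟩
  -- `S` has `r`-comparison relative to `y` for every `r ∈ (0,∞)`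
  have hcomp : ∀ r : ℝ≥0∞, 0 < r → HasRComparison r y := by
    intro r hr x z h
    apply hr₀ x z
    intro Λ hΛ
    rcases key Λ hΛ with h0 | htop
    · have hz := full_zero hy hΛ h0
      simp [hz x, hz (ys m), zero_le]
    · have hxz := h Λ hΛ
      rw [htop, ENNReal.mul_top hr.ne'] at hxz
      have hzt : Λ z = ⊤ := top_le_iff.mp (le_trans (le_add_self) hxz)
      rw [hzt]
      exact le_top
  have hrc0 : rc y = 0 := by
    by_contra h
    obtain ⟨ε, hε0, hεlt⟩ := exists_between (pos_iff_ne_zero.mpr h)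
    have hle' : rc y ≤ ε := sInf_le ⟨hε0, ne_top_of_lt hεlt, hcomp ε hε0⟩
    exact absurd (hle'.trans_lt hεlt) (lt_irrefl _)
  -- eventual bound `rc (n • ys n) ≤ r₀ / n`
  have hchain : Monotone ys := monotone_nat_of_le_succ hmono
  have hbound : ∀ n : ℕ, m ≤ n → 1 ≤ n → rc (n • ys n) ≤ r₀ / n := by
    intro n hmn hn1
    have hn0 : (n : ℝ≥0∞) ≠ 0 := Nat.cast_ne_zero.mpr (by omega)
    have hnt : (n : ℝ≥0∞) ≠ ⊤ := ENNReal.natCast_ne_top n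
    apply sInf_le
    refine ⟨ENNReal.div_pos hr₀pos.ne' hnt, (ENNReal.div_lt_top hr₀top hn0).ne, ?_⟩
    intro x z h
    apply hr₀ x z
    intro Λ hΛ
    have hineq := h Λ hΛ
    rw [cuf_nsmul hΛ, ← mul_assoc, ENNReal.div_mul_cancel hn0 hnt] at hineq
    calc Λ x + r₀ * Λ (ys m)
        ≤ Λ x + r₀ * Λ (ys n) := by gcongr; exact hΛ.mono (hchain hmn)
      _ ≤ Λ z := hineq
  have htend : Filter.Tendsto (fun n : ℕ => r₀ / n) Filter.atTop (nhds 0) := by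
    have h1 : Filter.Tendsto (fun n : ℕ => (n : ℝ≥0∞)⁻¹) Filter.atTop (nhds 0) :=
      ENNReal.tendsto_inv_nat_nhds_zero
    have := ENNReal.Tendsto.const_mul h1 (Or.inr hr₀top)
    simpa [ENNReal.div_eq_inv_mul, mul_comm] using this
  have hT : Filter.Tendsto (fun n : ℕ => rc (n • ys n)) Filter.atTop (nhds 0) := by
    apply tendsto_of_tendsto_of_tendsto_of_le_of_le' tendsto_const_nhds htend
    · exact Filter.Eventually.of_forall (fun n => zero_le)
    · filter_upwards [Filter.eventually_ge_atTop m, Filter.eventually_ge_atTop 1] with n h1 h2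
      exact hbound n h1 h2
  exact ⟨hrc0 ▸ hT, hrc0⟩
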